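/- Let (A,B) be an n×n real matrix pencil. Then every nontrivial linear combination tA + uB with (t,u) ∈ ℝ²\{(0,0)} is invertible if and only if there exist P, U ∈ GL_n(ℝ), T ∈ GL_2(ℝ) and an n×n real matrix Q having no real eigenvalue such that (A,B) = (P,U,T)·(Q, E_n). In other words, a real n×n pencil has full minimal ranks (n,n) exactly when its orbit contains a pencil of the form Q + λE with Q having no real eigenvalues. -/

import Mathlib

open Matrix Polynomial

lemma eval_charpoly' {n : ℕ} (M : Matrix (Fin n) (Fin n) ℝ) (μ : ℝ) :
    M.charpoly.eval μ = (μ • (1 : Matrix (Fin n) (Fin n) ℝ) - M).det := by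
  rw [Matrix.charpoly, ← coe_evalRingHom, RingHom.map_det]
  congr 1
  ext i j
  by_cases h : i = j <;>
    simp [h, charmatrix_apply_eq, charmatrix_apply_ne, Matrix.one_apply, Matrix.sub_apply,
      Matrix.smul_apply, RingHom.mapMatrix_apply, Matrix.map_apply]

/-- A real `n × n` pencil `(A, B)` has every nontrivial combination `t A + u B`
invertible if and only if it lies in the orbit (under the action of
`GL_n(ℝ) × GL_n(ℝ) × GL_2(ℝ)`) of a pencil `(Q, E_n)` where `Q` has no real
eigenvalue (its characteristic polynomial has no real root). -/
theorem full_minRanks_iff_no_real_eigenvalue {n : ℕ}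
    (A B : Matrix (Fin n) (Fin n) ℝ) :
    (∀ t u : ℝ, (t, u) ≠ 0 → IsUnit (t • A + u • B).det) ↔
      ∃ (P U : Matrix (Fin n) (Fin n) ℝ) (T : Matrix (Fin 2) (Fin 2) ℝ)
        (Q : Matrix (Fin n) (Fin n) ℝ),
        IsUnit P.det ∧ IsUnit U.det ∧ IsUnit T.det ∧
        (∀ μ : ℝ, ¬ Q.charpoly.IsRoot μ) ∧
        A = P * (T 0 0 • Q + T 0 1 • (1 : Matrix (Fin n) (Fin n) ℝ)) * U.transpose ∧
        B = P * (T 1 0 • Q + T 1 1 • (1 : Matrix (Fin n) (Fin n) ℝ)) * U.transpose := by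
  constructor
  · intro h
    have hB : IsUnit B.det := by
      have := h 0 1 (by simp [Prod.ext_iff])
      simpa using this
    refine ⟨B, 1, 1, B⁻¹ * A, hB, by simp, by simp, ?_, ?_, ?_⟩
    · intro μ hroot
      have hμ : IsUnit ((-1 : ℝ) • A + μ • B).det := h (-1) μ (by simp [Prod.ext_iff])
      have heval : (B⁻¹ * A).charpoly.eval μ = (μ • (1 : Matrix (Fin n) (Fin n) ℝ) - B⁻¹ * A).det :=
        eval_charpoly' _ _
      have hzero : (μ • (1 : Matrix (Fin n) (Fin n) ℝ) - B⁻¹ * A).det = 0 := by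
        rw [← heval]; exact hroot
      have hmul : B * (μ • (1 : Matrix (Fin n) (Fin n) ℝ) - B⁻¹ * A) =
          (-1 : ℝ) • A + μ • B := by
        rw [Matrix.mul_sub, Matrix.mul_smul, mul_one, ← Matrix.mul_assoc,
          Matrix.mul_nonsing_inv _ hB, Matrix.one_mul]
        module
      have := hμ
      rw [← hmul, det_mul, hzero, mul_zero] at this
      exact (by simp : ¬ IsUnit (0:ℝ)) this
    · rw [Matrix.transpose_one, Matrix.mul_one]
      simp only [Matrix.one_apply_eq, Matrix.one_apply_ne (show (0:Fin 2) ≠ 1 by decide),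
        one_smul, zero_smul, add_zero, ← Matrix.mul_assoc, Matrix.mul_nonsing_inv _ hB,
        Matrix.one_mul]
    · rw [Matrix.transpose_one, Matrix.mul_one]
      simp only [Matrix.one_apply_eq, Matrix.one_apply_ne (show (1:Fin 2) ≠ 0 by decide),
        one_smul, zero_smul, zero_add, smul_eq_mul, Matrix.mul_one]
  · rintro ⟨P, U, T, Q, hP, hU, hT, hQ, hA, hB⟩ t u htu
    set a : ℝ := t * T 0 0 + u * T 1 0 with ha
    set b : ℝ := t * T 0 1 + u * T 1 1 with hb
    have key : t • A + u • B = P * (a • Q + b • (1 : Matrix (Fin n) (Fin n) ℝ)) * U.transpose := by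
      have lift : ∀ (c : ℝ) (M : Matrix (Fin n) (Fin n) ℝ),
          c • (P * M * U.transpose) = P * (c • M) * U.transpose := by
        intro c M
        rw [← smul_mul_assoc, ← mul_smul_comm]
      rw [hA, hB, lift, lift, ← Matrix.add_mul, ← Matrix.mul_add]
      congr 2
      rw [ha, hb]
      module
    have hab : ¬ (a = 0 ∧ b = 0) := by
      rintro ⟨ha0, hb0⟩
      have h1 : t * T 0 0 + u * T 1 0 = 0 := ha ▸ ha0
      have h2 : t * T 0 1 + u * T 1 1 = 0 := hb ▸ hb0
      have hv : ![t, u] ᵥ* T = 0 := by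
        funext i
        fin_cases i <;> simp [Matrix.vecMul, dotProduct, Fin.sum_univ_two] <;> linarith
      have : ![t, u] = 0 := by
        have := congrArg (· ᵥ* T⁻¹) hv
        simpa [Matrix.vecMul_vecMul, Matrix.mul_nonsing_inv _ hT] using this
      apply htu
      have ht0 : t = 0 := by simpa using congrFun this 0
      have hu0 : u = 0 := by simpa using congrFun this 1
      simp [ht0, hu0, Prod.ext_iff]
    have hmid : IsUnit (a • Q + b • (1 : Matrix (Fin n) (Fin n) ℝ)).det := by
      rcases eq_or_ne a 0 with h0 | h0
      · have hb0 : b ≠ 0 := fun hb0 => hab ⟨h0, hb0⟩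
        rw [h0, zero_smul, zero_add, det_smul, det_one, mul_one]
        exact (isUnit_iff_ne_zero.mpr hb0).pow _
      · have : a • Q + b • (1 : Matrix (Fin n) (Fin n) ℝ) =
            (-a) • ((-b/a) • (1 : Matrix (Fin n) (Fin n) ℝ) - Q) := by
          rw [smul_sub, smul_smul]
          field_simp
          module
        rw [this, det_smul]
        refine ((isUnit_iff_ne_zero.mpr (neg_ne_zero.mpr h0)).pow _).mul ?_
        rw [← eval_charpoly']
        exact isUnit_iff_ne_zero.mpr (hQ (-b/a))
    rw [key, det_mul, det_mul]
    exact (hP.mul hmid).mul (by rwa [det_transpose])
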